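/- arXiv:1507.07349 — 2 statements merged into one kernel-verified Lean document; each statement's English description precedes it below -/
import Mathlib

section
/- Let X be a Fréchet space with increasing generating seminorms (p_i) and associated Hausdorff semimetrics H_i on cb(X). If a multifunction Γ: [0,1] → cb(X) is measurable by seminorm (i.e., for every i ∈ ℕ there exists a sequence of simple multifunctions Γ^i_n with H_i(Γ^i_n(t), Γ(t)) → 0 for a.e. t, where the sequence is allowed to depend on i), then Γ is totally measurable (i.e., there is a single sequence of simple multifunctions G_n such that for every i ∈ ℕ, H_i(G_n(t), Γ(t)) → 0 for a.e. t). -/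
open MeasureTheory Set Filter Topology Pointwise

noncomputable section

variable {X : Type*} [AddCommGroup X] [Module ℝ X] [UniformSpace X]
  [IsUniformAddGroup X] [ContinuousSMul ℝ X] [CompleteSpace X]

/-- The translation-invariant metric `d(x,y) = ∑_{i=1}^∞ 2^{-i} p_i(x-y)/(1+p_i(x-y))`
built from the sequence of seminorms (indexed from 1). -/
def frechetDist (p : ℕ → Seminorm ℝ X) (x y : X) : ℝ :=
  ∑' i : ℕ, (p (i + 1) (x - y) / (1 + p (i + 1) (x - y))) / 2 ^ (i + 1)

/-- The excess `e(A,B) = sup_{a ∈ A} inf_{b ∈ B} ρ a b` of `A` over `B`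
with respect to a distance-like function `ρ`. -/
def excess (ρ : X → X → ℝ) (A B : Set X) : ℝ :=
  sSup ((fun a => sInf ((fun b => ρ a b) '' B)) '' A)

/-- Hausdorff (semi)distance associated with a distance-like function. -/
def hDist (ρ : X → X → ℝ) (A B : Set X) : ℝ := max (excess ρ A B) (excess ρ B A)

/-- The (semi)distance associated to a seminorm. -/
def semiDist (q : Seminorm ℝ X) (x y : X) : ℝ := q (x - y)

/-- Membership in `cb(X)`: nonempty closed bounded convex subsets of `X`. -/
def IsCB (A : Set X) : Prop :=
  A.Nonempty ∧ IsClosed A ∧ Bornology.IsVonNBounded ℝ A ∧ Convex ℝ A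

/-- Membership in `ck(X)`: nonempty compact convex subsets of `X`. -/
def IsCK (A : Set X) : Prop := A.Nonempty ∧ IsCompact A ∧ Convex ℝ A

/-- A simple multifunction: finitely many values, each attained on a Lebesgue measurable set. -/
def IsSimpleMF (Γ : ℝ → Set X) : Prop :=
  (Set.range Γ).Finite ∧ ∀ C : Set X, MeasurableSet {t | Γ t = C}

/-- The support function `σ(x*, C) = sup_{x ∈ C} ⟨x*, x⟩`. -/
def suppFn (f : X → ℝ) (C : Set X) : ℝ := sSup (f '' C)

open Classical in
/-- Integral of a simple multifunction: `∫_E Γ = ∑_C μ(E ∩ Γ⁻¹{C}) • C` (Minkowski sum). -/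
def simpleIntegral (Γ : ℝ → Set X) (E : Set ℝ) : Set X :=
  if h : (Set.range Γ).Finite then
    ∑ C ∈ h.toFinset, (volume (E ∩ {t | Γ t = C})).toReal • C
  else ∅

/-- The polar of the unit semiball `U = {x : q x ≤ 1}` inside the topological dual. -/
def polarSet (q : Seminorm ℝ X) : Set (X →L[ℝ] ℝ) := {f | ∀ x : X, q x ≤ 1 → |f x| ≤ 1}


end

noncomputable section

variable {X : Type*} [AddCommGroup X] [Module ℝ X] [UniformSpace X]
  [IsUniformAddGroup X] [ContinuousSMul ℝ X] [CompleteSpace X]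

/-- Lebesgue measure on `[0,1]`. -/
def μ01 : MeasureTheory.Measure ℝ := volume.restrict (Set.Icc 0 1)

/-- Bochner measurability of a multifunction with values satisfying `V`:
a.e. approximation by simple multifunctions in the Hausdorff metric of `frechetDist p`. -/
def BochnerMeasMF (p : ℕ → Seminorm ℝ X) (V : Set X → Prop) (Γ : ℝ → Set X) : Prop :=
  ∃ Γₙ : ℕ → ℝ → Set X, (∀ n, IsSimpleMF (Γₙ n) ∧ ∀ t, V (Γₙ n t)) ∧
    ∀ᵐ t ∂μ01, Tendsto (fun n => hDist (frechetDist p) (Γₙ n t) (Γ t)) atTop (𝓝 0)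

/-- Total measurability: a single sequence of simple multifunctions converging a.e.
in every Hausdorff semimetric `H_i`. -/
def TotallyMeasMF (p : ℕ → Seminorm ℝ X) (V : Set X → Prop) (Γ : ℝ → Set X) : Prop :=
  ∃ Γₙ : ℕ → ℝ → Set X, (∀ n, IsSimpleMF (Γₙ n) ∧ ∀ t, V (Γₙ n t)) ∧
    ∀ i : ℕ, ∀ᵐ t ∂μ01, Tendsto (fun n => hDist (semiDist (p i)) (Γₙ n t) (Γ t)) atTop (𝓝 0)

/-- Measurability by seminorm: for every `i` there is a sequence of simple multifunctions
(depending on `i`) converging a.e. in `H_i`. -/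
def SeminormMeasMF (p : ℕ → Seminorm ℝ X) (V : Set X → Prop) (Γ : ℝ → Set X) : Prop :=
  ∀ i : ℕ, ∃ Γₙ : ℕ → ℝ → Set X, (∀ n, IsSimpleMF (Γₙ n) ∧ ∀ t, V (Γₙ n t)) ∧
    ∀ᵐ t ∂μ01, Tendsto (fun n => hDist (semiDist (p i)) (Γₙ n t) (Γ t)) atTop (𝓝 0)

/-- Pettis integrability in `ck(X)`: the support functions are integrable and over each
measurable `E ⊆ [0,1]` there is a compact convex set whose support function is the
integral of the support functions. -/
def PettisIntegrableCK (Γ : ℝ → Set X) : Prop :=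
  (∀ x' : X →L[ℝ] ℝ, MeasureTheory.IntegrableOn
      (fun t => suppFn (⇑x') (Γ t)) (Set.Icc 0 1) volume) ∧
  ∀ E ⊆ Set.Icc (0:ℝ) 1, MeasurableSet E → ∃ C : Set X, IsCK C ∧
    ∀ x' : X →L[ℝ] ℝ, suppFn (⇑x') C = ∫ t in E, suppFn (⇑x') (Γ t)

/-- `Γ` is integrable with integral assignment `I`: it is totally measurable via a sequence
of `ck(X)`-valued simple multifunctions which is Cauchy in mean for every `H_i`, and for each
measurable `E ⊆ [0,1]` the integrals of the simple multifunctions converge in each `H_i` to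
the compact convex set `I E`. -/
def HasIntegralMF (p : ℕ → Seminorm ℝ X) (Γ : ℝ → Set X) (I : Set ℝ → Set X) : Prop :=
  ∃ Γₙ : ℕ → ℝ → Set X,
    (∀ n, IsSimpleMF (Γₙ n) ∧ ∀ t, IsCK (Γₙ n t)) ∧
    (∀ i : ℕ, ∀ᵐ t ∂μ01,
      Tendsto (fun n => hDist (semiDist (p i)) (Γₙ n t) (Γ t)) atTop (𝓝 0)) ∧
    (∀ i : ℕ, ∀ ε > (0:ℝ), ∃ N, ∀ n ≥ N, ∀ m ≥ N,
      ∫ t in Set.Icc (0:ℝ) 1, hDist (semiDist (p i)) (Γₙ n t) (Γₙ m t) < ε) ∧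
    (∀ E ⊆ Set.Icc (0:ℝ) 1, MeasurableSet E → IsCK (I E) ∧
      ∀ i : ℕ, Tendsto (fun n => hDist (semiDist (p i)) (simpleIntegral (Γₙ n) E) (I E))
        atTop (𝓝 0))

/-- `Γ` is integrable by seminorm (p-integrable) with integral assignment `I`. -/
def HasPIntegralMF (p : ℕ → Seminorm ℝ X) (Γ : ℝ → Set X) (I : Set ℝ → Set X) : Prop :=
  ∀ i : ℕ, ∃ Γₙ : ℕ → ℝ → Set X,
    (∀ n, IsSimpleMF (Γₙ n) ∧ ∀ t, IsCK (Γₙ n t)) ∧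
    (∀ᵐ t ∂μ01, Tendsto (fun n => hDist (semiDist (p i)) (Γₙ n t) (Γ t)) atTop (𝓝 0)) ∧
    (∀ n, MeasureTheory.IntegrableOn
      (fun t => hDist (semiDist (p i)) (Γₙ n t) (Γ t)) (Set.Icc 0 1) volume) ∧
    MeasureTheory.TendstoInMeasure μ01
      (fun n t => hDist (semiDist (p i)) (Γₙ n t) (Γ t)) atTop (fun _ => (0:ℝ)) ∧
    (∀ E ⊆ Set.Icc (0:ℝ) 1, MeasurableSet E →
      Tendsto (fun n => ∫ t in E, hDist (semiDist (p i)) (Γₙ n t) (Γ t)) atTop (𝓝 0) ∧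
      (IsCK (I E) ∧
        Tendsto (fun n => hDist (semiDist (p i)) (simpleIntegral (Γₙ n) E) (I E))
          atTop (𝓝 0)))

end


section Stmt5Aux
set_option linter.unusedSectionVars false

open MeasureTheory Set Filter Topology

variable {X : Type*} [AddCommGroup X] [Module ℝ X] [UniformSpace X]
  [IsUniformAddGroup X] [ContinuousSMul ℝ X] [CompleteSpace X]

/-- Boundedness of a set with respect to a seminorm. -/
def QBdd (q : Seminorm ℝ X) (A : Set X) : Prop := ∃ r, ∀ x ∈ A, q x ≤ r

/-- Distance from a point to a set. -/
noncomputable def dq (q : Seminorm ℝ X) (a : X) (B : Set X) : ℝ :=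
  sInf ((fun b => semiDist q a b) '' B)

lemma excess_eq (q : Seminorm ℝ X) (A B : Set X) :
    excess (semiDist q) A B = sSup ((fun a => dq q a B) '' A) := rfl

lemma semiDist_nonneg (q : Seminorm ℝ X) (x y : X) : 0 ≤ semiDist q x y :=
  apply_nonneg q _

lemma semiDist_triangle (q : Seminorm ℝ X) (x y z : X) :
    semiDist q x z ≤ semiDist q x y + semiDist q y z := by
  have h : x - z = (x - y) + (y - z) := by abel
  simp only [semiDist, h]
  exact map_add_le_add q _ _

lemma semiDist_le_add (q : Seminorm ℝ X) (x y : X) : semiDist q x y ≤ q x + q y := by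
  have h : x - y = x + (-y) := by abel
  simp only [semiDist, h]
  calc q (x + -y) ≤ q x + q (-y) := map_add_le_add q _ _
    _ = q x + q y := by rw [map_neg_eq_map]

lemma bddBelow_dq_set (q : Seminorm ℝ X) (a : X) (B : Set X) :
    BddBelow ((fun b => semiDist q a b) '' B) :=
  ⟨0, by rintro x ⟨b, _, rfl⟩; exact semiDist_nonneg q a b⟩

lemma dq_nonneg (q : Seminorm ℝ X) (a : X) (B : Set X) : 0 ≤ dq q a B :=
  Real.sInf_nonneg (by rintro x ⟨b, _, rfl⟩; exact semiDist_nonneg q a b)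

lemma dq_le_of_mem {q : Seminorm ℝ X} {a b : X} {B : Set X} (hb : b ∈ B) :
    dq q a B ≤ semiDist q a b :=
  csInf_le (bddBelow_dq_set q a B) ⟨b, hb, rfl⟩

lemma le_dq {q : Seminorm ℝ X} {a : X} {B : Set X} {c : ℝ} (hB : B.Nonempty)
    (h : ∀ b ∈ B, c ≤ semiDist q a b) : c ≤ dq q a B :=
  le_csInf (hB.image _) (by rintro x ⟨b, hb, rfl⟩; exact h b hb)

lemma dq_bound {q : Seminorm ℝ X} {a : X} {B : Set X} {ra rB : ℝ} (haq : q a ≤ ra)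
    (hB : B.Nonempty) (bB : ∀ x ∈ B, q x ≤ rB) : dq q a B ≤ ra + rB := by
  obtain ⟨b, hb⟩ := hB
  calc dq q a B ≤ semiDist q a b := dq_le_of_mem hb
    _ ≤ q a + q b := semiDist_le_add q a b
    _ ≤ ra + rB := add_le_add haq (bB b hb)

lemma bddAbove_excessSet {q : Seminorm ℝ X} {A B : Set X} (bA : QBdd q A) (hB : B.Nonempty)
    (bB : QBdd q B) : BddAbove ((fun a => dq q a B) '' A) := by
  obtain ⟨rA, hrA⟩ := bA; obtain ⟨rB, hrB⟩ := bB
  exact ⟨rA + rB, by rintro x ⟨a, ha, rfl⟩; exact dq_bound (hrA a ha) hB hrB⟩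

lemma dq_le_excess {q : Seminorm ℝ X} {A B : Set X} {a : X} (ha : a ∈ A) (bA : QBdd q A)
    (hB : B.Nonempty) (bB : QBdd q B) : dq q a B ≤ excess (semiDist q) A B := by
  rw [excess_eq]
  exact le_csSup (bddAbove_excessSet bA hB bB) (Set.mem_image_of_mem _ ha)

lemma excess_nonneg' {q : Seminorm ℝ X} {A B : Set X} (hA : A.Nonempty) (hB : B.Nonempty)
    (bA : QBdd q A) (bB : QBdd q B) : 0 ≤ excess (semiDist q) A B := by
  obtain ⟨a, ha⟩ := hA
  exact (dq_nonneg q a B).trans (dq_le_excess ha bA hB bB)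

lemma excess_le' {q : Seminorm ℝ X} {A B : Set X} {c : ℝ} (hc : 0 ≤ c)
    (h : ∀ a ∈ A, dq q a B ≤ c) : excess (semiDist q) A B ≤ c := by
  rw [excess_eq]
  exact Real.sSup_le (by rintro x ⟨a, ha, rfl⟩; exact h a ha) hc

lemma hDist_nonneg' {q : Seminorm ℝ X} {A B : Set X} (hA : A.Nonempty) (hB : B.Nonempty)
    (bA : QBdd q A) (bB : QBdd q B) : 0 ≤ hDist (semiDist q) A B :=
  le_max_of_le_left (excess_nonneg' hA hB bA bB)

lemma hDist_symm' (q : Seminorm ℝ X) (A B : Set X) :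
    hDist (semiDist q) A B = hDist (semiDist q) B A := max_comm _ _

lemma excess_mono_q {q q' : Seminorm ℝ X} {A B : Set X} (hq : ∀ x, q x ≤ q' x)
    (hA : A.Nonempty) (hB : B.Nonempty) (bA : QBdd q' A) (bB : QBdd q' B) :
    excess (semiDist q) A B ≤ excess (semiDist q') A B := by
  refine excess_le' (excess_nonneg' hA hB bA bB) (fun a ha => ?_)
  have h1 : dq q a B ≤ dq q' a B :=
    le_dq hB (fun b hb => (dq_le_of_mem hb).trans (hq _))
  exact h1.trans (dq_le_excess ha bA hB bB)

lemma hDist_mono_q {q q' : Seminorm ℝ X} {A B : Set X} (hq : ∀ x, q x ≤ q' x)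
    (hA : A.Nonempty) (hB : B.Nonempty) (bA : QBdd q' A) (bB : QBdd q' B) :
    hDist (semiDist q) A B ≤ hDist (semiDist q') A B :=
  max_le_max (excess_mono_q hq hA hB bA bB) (excess_mono_q hq hB hA bB bA)

lemma excess_triangle' {q : Seminorm ℝ X} {A B C : Set X} (hA : A.Nonempty) (hB : B.Nonempty)
    (hC : C.Nonempty) (bA : QBdd q A) (bB : QBdd q B) (bC : QBdd q C) :
    excess (semiDist q) C A ≤ excess (semiDist q) C B + excess (semiDist q) B A := by
  refine excess_le' (add_nonneg (excess_nonneg' hC hB bC bB) (excess_nonneg' hB hA bB bA))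
    (fun c hc => ?_)
  have key : ∀ b ∈ B, dq q c A ≤ semiDist q c b + excess (semiDist q) B A := by
    intro b hb
    have h1 : dq q c A - semiDist q c b ≤ dq q b A := by
      refine le_dq hA (fun a ha => ?_)
      have h2 : dq q c A ≤ semiDist q c a := dq_le_of_mem ha
      have h3 := semiDist_triangle q c b a
      linarith
    have h4 : dq q b A ≤ excess (semiDist q) B A := dq_le_excess hb bB hA bA
    linarith
  have h2 : dq q c A - excess (semiDist q) B A ≤ dq q c B :=
    le_dq hB (fun b hb => by linarith [key b hb])
  have h3 : dq q c B ≤ excess (semiDist q) C B := dq_le_excess hc bC hB bB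
  linarith

lemma hDist_triangle' {q : Seminorm ℝ X} {A B C : Set X} (hA : A.Nonempty) (hB : B.Nonempty)
    (hC : C.Nonempty) (bA : QBdd q A) (bB : QBdd q B) (bC : QBdd q C) :
    hDist (semiDist q) C A ≤ hDist (semiDist q) C B + hDist (semiDist q) B A := by
  refine max_le ?_ ?_
  · exact (excess_triangle' hA hB hC bA bB bC).trans
      (add_le_add (le_max_left _ _) (le_max_left _ _))
  · have h := excess_triangle' hC hB hA bC bB bA
    calc excess (semiDist q) A C ≤ excess (semiDist q) A B + excess (semiDist q) B C := h
      _ ≤ hDist (semiDist q) B A + hDist (semiDist q) C B :=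
        add_le_add (le_max_right _ _) (le_max_right _ _)
      _ = hDist (semiDist q) C B + hDist (semiDist q) B A := add_comm _ _

lemma abs_hDist_sub' {q : Seminorm ℝ X} {A B C : Set X} (hA : A.Nonempty) (hB : B.Nonempty)
    (hC : C.Nonempty) (bA : QBdd q A) (bB : QBdd q B) (bC : QBdd q C) :
    |hDist (semiDist q) C A - hDist (semiDist q) C B| ≤ hDist (semiDist q) A B := by
  rw [abs_sub_le_iff]
  constructor
  · have h := hDist_triangle' hA hB hC bA bB bC
    have hs : hDist (semiDist q) B A = hDist (semiDist q) A B := hDist_symm' q B A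
    linarith
  · have h := hDist_triangle' hB hA hC bB bA bC
    linarith

lemma measurable_hDist_simple {F G : ℝ → Set X} (hF : IsSimpleMF F) (hG : IsSimpleMF G)
    (q : Seminorm ℝ X) : Measurable fun t => hDist (semiDist q) (F t) (G t) := by
  intro s _
  have heq : (fun t => hDist (semiDist q) (F t) (G t)) ⁻¹' s =
      ⋃ C ∈ hF.1.toFinset, ⋃ D ∈ hG.1.toFinset,
        ({t | F t = C} ∩ {t | G t = D}) ∩ {t | hDist (semiDist q) C D ∈ s} := by
    ext t
    simp only [Set.mem_preimage, Set.mem_iUnion, Set.mem_inter_iff, Set.mem_setOf_eq,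
      Set.Finite.mem_toFinset, Set.mem_range, exists_prop]
    constructor
    · intro h
      exact ⟨F t, ⟨t, rfl⟩, G t, ⟨t, rfl⟩, ⟨rfl, rfl⟩, h⟩
    · rintro ⟨C, -, D, -, ⟨h1, h2⟩, h3⟩
      rw [h1, h2]; exact h3
  rw [heq]
  refine MeasurableSet.biUnion hF.1.toFinset.countable_toSet (fun C _ => ?_)
  refine MeasurableSet.biUnion hG.1.toFinset.countable_toSet (fun D _ => ?_)
  refine ((hF.2 C).inter (hG.2 D)).inter ?_
  by_cases h : hDist (semiDist q) C D ∈ s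
  · simp only [h]; exact MeasurableSet.univ.congr (by ext t; simp [h])
  · have : {t : ℝ | hDist (semiDist q) C D ∈ s} = ∅ := by ext t; simp [h]
    rw [this]; exact MeasurableSet.empty

end Stmt5Aux

/-- a `cb(X)`-valued multifunction that is measurable by seminorm is totally
measurable. -/
theorem stmt5 {X : Type*} [AddCommGroup X] [Module ℝ X] [UniformSpace X]
    [IsUniformAddGroup X] [ContinuousSMul ℝ X] [CompleteSpace X]
    (p : ℕ → Seminorm ℝ X) (hp : WithSeminorms p) (hpmono : Monotone p)
    (Γ : ℝ → Set X) (hΓ : ∀ t ∈ Set.Icc (0:ℝ) 1, IsCB (Γ t))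
    (hsm : SeminormMeasMF p IsCB Γ) :
    TotallyMeasMF p IsCB Γ := by
  classical
  choose Γs hΓs hae using hsm
  haveI hfin : IsFiniteMeasure μ01 := by
    constructor
    rw [μ01, Measure.restrict_apply_univ, Real.volume_Icc]
    exact ENNReal.ofReal_lt_top
  have bddCB : ∀ {A : Set X}, IsCB A → ∀ j, QBdd (p j) A := by
    intro A hA j
    obtain ⟨r, -, hr⟩ := (hp.isVonNBounded_iff_seminorm_bounded.mp hA.2.2.1) j
    exact ⟨r, fun x hx => (hr x hx).le⟩
  have hIcc : ∀ᵐ t ∂μ01, t ∈ Set.Icc (0:ℝ) 1 := ae_restrict_mem measurableSet_Icc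
  -- a.e. strong measurability of the distance functions
  have hmeas : ∀ i N, AEStronglyMeasurable
      (fun t => hDist (semiDist (p i)) (Γs i N t) (Γ t)) μ01 := by
    intro i N
    have haem : AEMeasurable (fun t => hDist (semiDist (p i)) (Γs i N t) (Γ t)) μ01 := by
      refine aemeasurable_of_tendsto_metrizable_ae atTop
        (fun m => (measurable_hDist_simple (hΓs i N).1 (hΓs i m).1 (p i)).aemeasurable) ?_
      filter_upwards [hae i, hIcc] with t ht htI
      rw [tendsto_iff_dist_tendsto_zero]
      refine squeeze_zero (fun m => dist_nonneg) (fun m => ?_) ht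
      have habs := abs_hDist_sub' (hΓ t htI).1 ((hΓs i m).2 t).1 ((hΓs i N).2 t).1
        (bddCB (hΓ t htI) i) (bddCB ((hΓs i m).2 t) i) (bddCB ((hΓs i N).2 t) i)
      rw [Real.dist_eq]
      calc |hDist (semiDist (p i)) (Γs i N t) (Γs i m t)
            - hDist (semiDist (p i)) (Γs i N t) (Γ t)|
          = |hDist (semiDist (p i)) (Γs i N t) (Γ t)
            - hDist (semiDist (p i)) (Γs i N t) (Γs i m t)| := abs_sub_comm _ _
        _ ≤ hDist (semiDist (p i)) (Γ t) (Γs i m t) := habs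
        _ = hDist (semiDist (p i)) (Γs i m t) (Γ t) := hDist_symm' _ _ _
    exact haem.aestronglyMeasurable
  -- convergence in measure
  have hTIM : ∀ i, TendstoInMeasure μ01
      (fun N t => hDist (semiDist (p i)) (Γs i N t) (Γ t)) atTop (fun _ => (0:ℝ)) := by
    intro i
    refine tendstoInMeasure_of_tendsto_ae (hmeas i) ?_
    filter_upwards [hae i] with t ht using ht
  -- choose indices with small bad sets
  have hN : ∀ i : ℕ, ∃ N, μ01 {t | (2:ℝ)⁻¹ ^ i ≤
      dist (hDist (semiDist (p i)) (Γs i N t) (Γ t)) 0} < (2:ENNReal)⁻¹ ^ i := by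
    intro i
    have h := (tendstoInMeasure_iff_dist.mp (hTIM i)) ((2:ℝ)⁻¹ ^ i) (by positivity)
    have hpos : (0:ENNReal) < 2⁻¹ ^ i := ENNReal.pow_pos (by simp) i
    exact (h.eventually_lt_const hpos).exists
  choose N hNlt using hN
  refine ⟨fun n => Γs n (N n), fun n => hΓs n (N n), ?_⟩
  -- Borel-Cantelli
  have hsum : (∑' n : ℕ, μ01 {t | (2:ℝ)⁻¹ ^ n ≤
      dist (hDist (semiDist (p n)) (Γs n (N n) t) (Γ t)) 0}) ≠ ⊤ := by
    refine ne_top_of_le_ne_top ?_ (ENNReal.tsum_le_tsum fun n => (hNlt n).le)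
    rw [ENNReal.tsum_geometric]
    simp [ENNReal.one_sub_inv_two]
  have hev := MeasureTheory.ae_eventually_notMem hsum
  intro i
  filter_upwards [hev, hIcc] with t ht htI
  obtain ⟨M, hM⟩ := eventually_atTop.mp ht
  have h2 : Tendsto (fun n : ℕ => (2:ℝ)⁻¹ ^ n) atTop (𝓝 0) :=
    tendsto_pow_atTop_nhds_zero_of_lt_one (by norm_num) (by norm_num)
  refine squeeze_zero' ?_ ?_ h2
  · filter_upwards with n
    exact hDist_nonneg' ((hΓs n (N n)).2 t).1 (hΓ t htI).1
      (bddCB ((hΓs n (N n)).2 t) i) (bddCB (hΓ t htI) i)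
  · filter_upwards [eventually_ge_atTop (max M i)] with n hn
    have hMn : M ≤ n := (le_max_left M i).trans hn
    have hin : i ≤ n := (le_max_right M i).trans hn
    have hb1 : hDist (semiDist (p i)) (Γs n (N n) t) (Γ t)
        ≤ hDist (semiDist (p n)) (Γs n (N n) t) (Γ t) :=
      hDist_mono_q (fun x => hpmono hin x) ((hΓs n (N n)).2 t).1 (hΓ t htI).1
        (bddCB ((hΓs n (N n)).2 t) n) (bddCB (hΓ t htI) n)
    have hb2 : hDist (semiDist (p n)) (Γs n (N n) t) (Γ t) < (2:ℝ)⁻¹ ^ n := by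
      have hnm := hM n hMn
      simp only [Set.mem_setOf_eq, Real.dist_eq, sub_zero, not_le] at hnm
      exact (le_abs_self _).trans_lt hnm
    exact hb1.trans hb2.le
end

section
/- Let X be a Fréchet space. If a multifunction Γ: [0,1] → ck(X) is integrable (totally measurable with an approximating sequence of simple multifunctions that is Cauchy in mean for every Hausdorff semimetric H_i), then Γ is Pettis integrable in ck(X), and for every Lebesgue measurable E ⊆ [0,1] the two integrals coincide: σ(x*, ∫_E Γ dt) = ∫_E σ(x*, Γ(t)) dt for all x* ∈ X*. -/
open MeasureTheory Set Filter Topology Pointwise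

section AuxLemmas
set_option linter.unusedSectionVars false

open MeasureTheory Set Filter Topology Pointwise
open scoped ENNReal NNReal

variable {X : Type*} [AddCommGroup X] [Module ℝ X] [UniformSpace X]
  [IsUniformAddGroup X] [ContinuousSMul ℝ X] [CompleteSpace X]

lemma hDist_nonneg'_s9 {ρ : X → X → ℝ} (hρ : ∀ x y, 0 ≤ ρ x y) (A B : Set X) :
    0 ≤ hDist ρ A B := by
  refine le_trans ?_ (le_max_left _ _)
  refine Real.sSup_nonneg ?_
  rintro y ⟨a, -, rfl⟩
  refine Real.sInf_nonneg ?_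
  rintro z ⟨b, -, rfl⟩
  exact hρ a b

lemma hDist_comm' (ρ : X → X → ℝ) (A B : Set X) : hDist ρ A B = hDist ρ B A :=
  max_comm _ _

lemma suppFn_le_suppFn_add (q : Seminorm ℝ X) (hq : Continuous q) (x' : X →L[ℝ] ℝ)
    {c : ℝ} (hc : 0 ≤ c) (hx' : ∀ x, |x' x| ≤ c * q x)
    {A B : Set X} (hA : IsCompact A) (hAne : A.Nonempty)
    (hB : IsCompact B) (hBne : B.Nonempty) :
    suppFn (⇑x') A ≤ suppFn (⇑x') B + c * hDist (semiDist q) A B := by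
  obtain ⟨a, haA, hsup⟩ := hA.exists_sSup_image_eq hAne x'.continuous.continuousOn
  rw [suppFn, hsup]
  obtain ⟨b₀, hb₀⟩ := id hBne
  have hbddA : BddAbove ((fun a => q (a - b₀)) '' A) :=
    (hA.image (hq.comp (continuous_id.sub continuous_const))).bddAbove
  have hbdd : BddAbove ((fun a => sInf ((fun b => semiDist q a b) '' B)) '' A) := by
    refine ⟨sSup ((fun a => q (a - b₀)) '' A), ?_⟩
    rintro y ⟨a', ha', rfl⟩
    refine le_trans (csInf_le ⟨0, ?_⟩ ⟨b₀, hb₀, rfl⟩) (le_csSup hbddA ⟨a', ha', rfl⟩)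
    rintro z ⟨b, -, rfl⟩
    exact apply_nonneg q _
  have hsInf_le : sInf ((fun b => semiDist q a b) '' B) ≤ hDist (semiDist q) A B :=
    le_trans (le_csSup hbdd ⟨a, haA, rfl⟩) (le_max_left _ _)
  refine _root_.le_of_forall_pos_le_add fun ε hε => ?_
  have hε' : 0 < ε / (c + 1) := by positivity
  have hlt : sInf ((fun b => semiDist q a b) '' B) < hDist (semiDist q) A B + ε / (c + 1) :=
    lt_of_le_of_lt hsInf_le (lt_add_of_pos_right _ hε')
  obtain ⟨z, ⟨b, hbB, rfl⟩, hz⟩ := exists_lt_of_csInf_lt (hBne.image _) hlt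
  simp only [semiDist] at hz
  have h1 : x' b ≤ suppFn (⇑x') B := le_csSup (hB.image x'.continuous).bddAbove ⟨b, hbB, rfl⟩
  have h2 : x' a - x' b ≤ c * q (a - b) := by
    have h3 : x' a - x' b ≤ |x' (a - b)| := by rw [map_sub]; exact le_abs_self _
    exact h3.trans (hx' _)
  have h4 : c * q (a - b) ≤ c * (hDist (semiDist q) A B + ε / (c + 1)) :=
    mul_le_mul_of_nonneg_left hz.le hc
  have h5 : c * (ε / (c + 1)) ≤ ε := by
    rw [show c * (ε / (c + 1)) = ε * (c / (c + 1)) by ring]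
    calc ε * (c / (c + 1)) ≤ ε * 1 := by
          refine mul_le_mul_of_nonneg_left ?_ hε.le
          exact div_le_one_of_le₀ (by linarith) (by linarith)
      _ = ε := mul_one ε
  have h6 := hDist_nonneg'_s9 (ρ := semiDist q) (fun x y => apply_nonneg q _) A B
  nlinarith [mul_nonneg hc h6]

lemma abs_suppFn_sub_le (q : Seminorm ℝ X) (hq : Continuous q) (x' : X →L[ℝ] ℝ)
    {c : ℝ} (hc : 0 ≤ c) (hx' : ∀ x, |x' x| ≤ c * q x)
    {A B : Set X} (hA : IsCompact A) (hAne : A.Nonempty)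
    (hB : IsCompact B) (hBne : B.Nonempty) :
    |suppFn (⇑x') A - suppFn (⇑x') B| ≤ c * hDist (semiDist q) A B := by
  rw [abs_sub_le_iff]
  constructor
  · have := suppFn_le_suppFn_add q hq x' hc hx' hA hAne hB hBne; linarith
  · have := suppFn_le_suppFn_add q hq x' hc hx' hB hBne hA hAne
    rw [hDist_comm'] at this; linarith

lemma isFiniteMeasure_restrict_of_subset {E : Set ℝ} (hE : E ⊆ Set.Icc (0:ℝ) 1) :
    IsFiniteMeasure (volume.restrict E) := by
  constructor
  rw [Measure.restrict_apply_univ]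
  exact lt_of_le_of_lt (measure_mono hE) isCompact_Icc.measure_lt_top

lemma simpleMF_repr (Φ : ℝ → Set X) (h : IsSimpleMF Φ) (G : Set X → ℝ) :
    (fun t => G (Φ t)) = fun t =>
      ∑ C ∈ h.1.toFinset, ({s | Φ s = C}).indicator (fun _ => G C) t := by
  funext t
  rw [Finset.sum_eq_single_of_mem (Φ t) (h.1.mem_toFinset.2 ⟨t, rfl⟩)]
  · rw [Set.indicator_of_mem (show t ∈ {s | Φ s = Φ t} from rfl)]
  · intro C _ hne
    rw [Set.indicator_of_notMem]
    exact fun hmem => hne hmem.symm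

lemma simpleMF_measurable (Φ : ℝ → Set X) (h : IsSimpleMF Φ) (G : Set X → ℝ) :
    Measurable (fun t => G (Φ t)) := by
  rw [simpleMF_repr Φ h G]
  exact Finset.measurable_sum _ fun C _ =>
    Measurable.indicator measurable_const (h.2 C)

lemma simpleMF_integrable (Φ : ℝ → Set X) (h : IsSimpleMF Φ) (G : Set X → ℝ)
    (μ : MeasureTheory.Measure ℝ) [IsFiniteMeasure μ] :
    Integrable (fun t => G (Φ t)) μ := by
  rw [simpleMF_repr Φ h G]
  exact integrable_finset_sum _ fun C _ => (integrable_const _).indicator (h.2 C)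

lemma simpleMF_pair_repr (Φ Ψ : ℝ → Set X) (hΦ : IsSimpleMF Φ) (hΨ : IsSimpleMF Ψ)
    (F : Set X → Set X → ℝ) :
    (fun t => F (Φ t) (Ψ t)) = fun t =>
      ∑ C ∈ hΦ.1.toFinset, ∑ D ∈ hΨ.1.toFinset,
        ({s | Φ s = C} ∩ {s | Ψ s = D}).indicator (fun _ => F C D) t := by
  funext t
  rw [Finset.sum_eq_single_of_mem (Φ t) (hΦ.1.mem_toFinset.2 ⟨t, rfl⟩)]
  · rw [Finset.sum_eq_single_of_mem (Ψ t) (hΨ.1.mem_toFinset.2 ⟨t, rfl⟩)]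
    · rw [Set.indicator_of_mem (show t ∈ {s | Φ s = Φ t} ∩ {s | Ψ s = Ψ t} from ⟨rfl, rfl⟩)]
    · intro D _ hne
      rw [Set.indicator_of_notMem]
      exact fun hmem => hne hmem.2.symm
  · intro C _ hne
    rw [Finset.sum_eq_zero]
    intro D _
    rw [Set.indicator_of_notMem]
    exact fun hmem => hne hmem.1.symm

lemma simpleMF_pair_measurable (Φ Ψ : ℝ → Set X) (hΦ : IsSimpleMF Φ) (hΨ : IsSimpleMF Ψ)
    (F : Set X → Set X → ℝ) :
    Measurable (fun t => F (Φ t) (Ψ t)) := by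
  rw [simpleMF_pair_repr Φ Ψ hΦ hΨ F]
  exact Finset.measurable_sum _ fun C _ => Finset.measurable_sum _ fun D _ =>
    Measurable.indicator measurable_const ((hΦ.2 C).inter (hΨ.2 D))

lemma simpleMF_pair_integrable (Φ Ψ : ℝ → Set X) (hΦ : IsSimpleMF Φ) (hΨ : IsSimpleMF Ψ)
    (F : Set X → Set X → ℝ) (μ : MeasureTheory.Measure ℝ) [IsFiniteMeasure μ] :
    Integrable (fun t => F (Φ t) (Ψ t)) μ := by
  rw [simpleMF_pair_repr Φ Ψ hΦ hΨ F]
  exact integrable_finset_sum _ fun C _ => integrable_finset_sum _ fun D _ =>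
    (integrable_const _).indicator ((hΦ.2 C).inter (hΨ.2 D))

lemma suppFn_zeroSet (x' : X →L[ℝ] ℝ) : suppFn (⇑x') (0 : Set X) = 0 := by
  have : (0 : Set X) = {0} := rfl
  rw [suppFn, this, Set.image_singleton, csSup_singleton, map_zero]

lemma suppFn_addSet (x' : X →L[ℝ] ℝ) {A B : Set X} (hA : IsCompact A) (hAne : A.Nonempty)
    (hB : IsCompact B) (hBne : B.Nonempty) :
    suppFn (⇑x') (A + B) = suppFn (⇑x') A + suppFn (⇑x') B := by
  unfold suppFn
  rw [Set.image_add x']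
  exact csSup_add (hAne.image _) (hA.image x'.continuous).bddAbove
    (hBne.image _) (hB.image x'.continuous).bddAbove

lemma suppFn_smulSet (x' : X →L[ℝ] ℝ) {c : ℝ} (hc : 0 ≤ c) (C : Set X) :
    suppFn (⇑x') (c • C) = c * suppFn (⇑x') C := by
  unfold suppFn
  rw [Set.image_smul_comm (⇑x') c C (fun b => x'.map_smul c b),
    Real.sSup_smul_of_nonneg hc, smul_eq_mul]

lemma isCompact_nonempty_finsetSum {ι : Type*} (s : Finset ι) (f : ι → Set X)
    (hf : ∀ j ∈ s, IsCompact (f j) ∧ (f j).Nonempty) :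
    IsCompact (∑ j ∈ s, f j) ∧ (∑ j ∈ s, f j).Nonempty := by
  classical
  induction s using Finset.induction_on with
  | empty =>
    rw [Finset.sum_empty]
    exact ⟨show IsCompact ({0} : Set X) from isCompact_singleton,
      show ({0} : Set X).Nonempty from ⟨0, rfl⟩⟩
  | @insert j s' hj ih =>
    rw [Finset.sum_insert hj]
    have h1 := hf j (Finset.mem_insert_self _ _)
    have h2 := ih fun k hk => hf k (Finset.mem_insert_of_mem hk)
    exact ⟨h1.1.add h2.1, h1.2.add h2.2⟩

lemma suppFn_finsetSum {ι : Type*} (x' : X →L[ℝ] ℝ) (s : Finset ι) (f : ι → Set X)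
    (hf : ∀ j ∈ s, IsCompact (f j) ∧ (f j).Nonempty) :
    suppFn (⇑x') (∑ j ∈ s, f j) = ∑ j ∈ s, suppFn (⇑x') (f j) := by
  classical
  induction s using Finset.induction_on with
  | empty => rw [Finset.sum_empty, Finset.sum_empty, suppFn_zeroSet]
  | @insert j s' hj ih =>
    have h1 := hf j (Finset.mem_insert_self _ _)
    have hrest : ∀ k ∈ s', IsCompact (f k) ∧ (f k).Nonempty :=
      fun k hk => hf k (Finset.mem_insert_of_mem hk)
    have h2 := isCompact_nonempty_finsetSum s' f hrest
    rw [Finset.sum_insert hj, Finset.sum_insert hj,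
      suppFn_addSet x' h1.1 h1.2 h2.1 h2.2, ih hrest]

lemma simpleIntegral_spec (Φ : ℝ → Set X) (h : IsSimpleMF Φ) (hCK : ∀ t, IsCK (Φ t))
    (E : Set ℝ) :
    (IsCompact (simpleIntegral Φ E) ∧ (simpleIntegral Φ E).Nonempty) ∧
    ∀ x' : X →L[ℝ] ℝ, suppFn (⇑x') (simpleIntegral Φ E)
      = ∑ C ∈ h.1.toFinset, (volume (E ∩ {t | Φ t = C})).toReal * suppFn (⇑x') C := by
  have hmem : ∀ C ∈ h.1.toFinset,
      IsCompact ((volume (E ∩ {t | Φ t = C})).toReal • C) ∧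
      ((volume (E ∩ {t | Φ t = C})).toReal • C).Nonempty := by
    intro C hC
    obtain ⟨t, rfl⟩ := Set.mem_range.1 (h.1.mem_toFinset.1 hC)
    exact ⟨(hCK t).2.1.smul _, (hCK t).1.smul_set⟩
  have hrw : simpleIntegral Φ E
      = ∑ C ∈ h.1.toFinset, (volume (E ∩ {t | Φ t = C})).toReal • C := by
    rw [simpleIntegral, dif_pos h.1]
  rw [hrw]
  refine ⟨isCompact_nonempty_finsetSum _ _ hmem, fun x' => ?_⟩
  rw [suppFn_finsetSum x' _ _ hmem]
  exact Finset.sum_congr rfl fun C _ => suppFn_smulSet x' ENNReal.toReal_nonneg C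

lemma setIntegral_suppFn_simple (Φ : ℝ → Set X) (h : IsSimpleMF Φ)
    {E : Set ℝ} (hEm : MeasurableSet E) (hE : E ⊆ Set.Icc (0:ℝ) 1) (x' : X →L[ℝ] ℝ) :
    ∫ t in E, suppFn (⇑x') (Φ t)
      = ∑ C ∈ h.1.toFinset, (volume (E ∩ {t | Φ t = C})).toReal * suppFn (⇑x') C := by
  haveI := isFiniteMeasure_restrict_of_subset hE
  rw [show (fun t => suppFn (⇑x') (Φ t)) = _ from simpleMF_repr Φ h (suppFn (⇑x'))]
  rw [MeasureTheory.integral_finset_sum _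
    (fun C _ => (integrable_const _).indicator (h.2 C))]
  refine Finset.sum_congr rfl fun C _ => ?_
  rw [integral_indicator_const _ (h.2 C), measureReal_def, Measure.restrict_apply (h.2 C),
    smul_eq_mul, Set.inter_comm]

end AuxLemmas

open scoped ENNReal NNReal


/-- if `Γ : [0,1] → ck(X)` is integrable (totally measurable via simple
multifunctions Cauchy in mean in each `H_i`, with `H_i`-limit integrals `I E ∈ ck(X)`),
then `Γ` is Pettis integrable in `ck(X)` and the integrals coincide:
`σ(x*, I E) = ∫_E σ(x*, Γ(t)) dt` for all `x*`. -/
theorem stmt9 {X : Type*} [AddCommGroup X] [Module ℝ X] [UniformSpace X]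
    [IsUniformAddGroup X] [ContinuousSMul ℝ X] [CompleteSpace X]
    (p : ℕ → Seminorm ℝ X) (hp : WithSeminorms p) (hpmono : Monotone p)
    (Γ : ℝ → Set X) (hΓ : ∀ t ∈ Set.Icc (0:ℝ) 1, IsCK (Γ t))
    (Γₙ : ℕ → ℝ → Set X)
    (hsimple : ∀ n, IsSimpleMF (Γₙ n) ∧ ∀ t, IsCK (Γₙ n t))
    (hconv : ∀ i : ℕ, ∀ᵐ t ∂μ01,
      Tendsto (fun n => hDist (semiDist (p i)) (Γₙ n t) (Γ t)) atTop (𝓝 0))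
    (hcauchy : ∀ i : ℕ, ∀ ε > (0:ℝ), ∃ N, ∀ n ≥ N, ∀ m ≥ N,
      ∫ t in Set.Icc (0:ℝ) 1, hDist (semiDist (p i)) (Γₙ n t) (Γₙ m t) < ε)
    (I : Set ℝ → Set X)
    (hI : ∀ E ⊆ Set.Icc (0:ℝ) 1, MeasurableSet E → IsCK (I E) ∧
      ∀ i : ℕ, Tendsto (fun n => hDist (semiDist (p i)) (simpleIntegral (Γₙ n) E) (I E))
        atTop (𝓝 0)) :
    (∀ x' : X →L[ℝ] ℝ, MeasureTheory.IntegrableOn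
        (fun t => suppFn (⇑x') (Γ t)) (Set.Icc 0 1) volume) ∧
    ∀ E ⊆ Set.Icc (0:ℝ) 1, MeasurableSet E → ∀ x' : X →L[ℝ] ℝ,
      suppFn (⇑x') (I E) = ∫ t in E, suppFn (⇑x') (Γ t) := by
  classical
  haveI hfin01 : IsFiniteMeasure μ01 := isFiniteMeasure_restrict_of_subset subset_rfl
  have hbound : ∀ x' : X →L[ℝ] ℝ, ∃ i₀ : ℕ, ∃ c : ℝ, 0 ≤ c ∧ ∀ x, |x' x| ≤ c * p i₀ x := by
    intro x'
    have hq'app : ∀ x, ((normSeminorm ℝ ℝ).comp x'.toLinearMap) x = |x' x| := fun x => by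
      simp [Seminorm.comp_apply, Real.norm_eq_abs]
    have hq'cont : Continuous ⇑((normSeminorm ℝ ℝ).comp x'.toLinearMap) := by
      have h : ⇑((normSeminorm ℝ ℝ).comp x'.toLinearMap) = fun x => |x' x| := funext hq'app
      rw [h]; exact x'.continuous.abs
    obtain ⟨s, c₀, _, hle⟩ := Seminorm.bound_of_continuous hp _ hq'cont
    refine ⟨s.sup id, (c₀ : ℝ), c₀.coe_nonneg, fun x => ?_⟩
    have h2 : (s.sup p) x ≤ p (s.sup id) x :=
      (Finset.sup_le fun j hj => hpmono (Finset.le_sup (f := id) hj) : s.sup p ≤ p (s.sup id)) x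
    calc |x' x| = ((normSeminorm ℝ ℝ).comp x'.toLinearMap) x := (hq'app x).symm
      _ ≤ (c₀ • s.sup p) x := hle x
      _ = (c₀ : ℝ) * (s.sup p) x := by rw [Seminorm.smul_apply, NNReal.smul_def, smul_eq_mul]
      _ ≤ (c₀ : ℝ) * p (s.sup id) x := mul_le_mul_of_nonneg_left h2 c₀.coe_nonneg
  have main : ∀ x' : X →L[ℝ] ℝ,
      Integrable (fun t => suppFn (⇑x') (Γ t)) μ01 ∧
      ∀ E, E ⊆ Set.Icc (0:ℝ) 1 → MeasurableSet E →
        suppFn (⇑x') (I E) = ∫ t in E, suppFn (⇑x') (Γ t) := by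
    intro x'
    obtain ⟨i₀, c, hc, hx'⟩ := hbound x'
    have hpc : Continuous (p i₀) := hp.continuous_seminorm i₀
    have key : ∀ {A B : Set X}, IsCompact A → A.Nonempty → IsCompact B → B.Nonempty →
        |suppFn (⇑x') A - suppFn (⇑x') B| ≤ c * hDist (semiDist (p i₀)) A B :=
      fun hA hAne hB hBne => abs_suppFn_sub_le (p i₀) hpc x' hc hx' hA hAne hB hBne
    have hHnn : ∀ A B : Set X, 0 ≤ hDist (semiDist (p i₀)) A B :=
      fun A B => hDist_nonneg'_s9 (ρ := semiDist (p i₀)) (fun x y => apply_nonneg _ _) A B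
    have hGmeas : ∀ n, Measurable (fun t => suppFn (⇑x') (Γₙ n t)) :=
      fun n => simpleMF_measurable (Γₙ n) (hsimple n).1 (suppFn (⇑x'))
    have hGint : ∀ n, Integrable (fun t => suppFn (⇑x') (Γₙ n t)) μ01 :=
      fun n => simpleMF_integrable (Γₙ n) (hsimple n).1 (suppFn (⇑x')) μ01
    have hmemIcc : ∀ᵐ t ∂μ01, t ∈ Set.Icc (0:ℝ) 1 := ae_restrict_mem measurableSet_Icc
    have hae : ∀ᵐ t ∂μ01, Tendsto (fun n => suppFn (⇑x') (Γₙ n t)) atTop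
        (𝓝 (suppFn (⇑x') (Γ t))) := by
      filter_upwards [hconv i₀, hmemIcc] with t ht htI
      rw [← tendsto_sub_nhds_zero_iff]
      refine squeeze_zero_norm (fun n => ?_) (by simpa using ht.const_mul c)
      rw [Real.norm_eq_abs]
      exact key ((hsimple n).2 t).2.1 ((hsimple n).2 t).1 (hΓ t htI).2.1 (hΓ t htI).1
    have hkeyCauchy : ∀ ε : ℝ, 0 < ε → ∃ N, ∀ n ≥ N,
        ∫⁻ t, ‖suppFn (⇑x') (Γₙ n t) - suppFn (⇑x') (Γ t)‖₊ ∂μ01 ≤ ENNReal.ofReal (c * ε) := by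
      intro ε hε
      obtain ⟨N, hN⟩ := hcauchy i₀ ε hε
      refine ⟨N, fun n hn => ?_⟩
      have hmeasnm : ∀ m, Measurable fun t =>
          (‖suppFn (⇑x') (Γₙ n t) - suppFn (⇑x') (Γₙ m t)‖₊ : ℝ≥0∞) :=
        fun m => ((hGmeas n).sub (hGmeas m)).enorm
      have step1 : ∫⁻ t, ‖suppFn (⇑x') (Γₙ n t) - suppFn (⇑x') (Γ t)‖₊ ∂μ01
          ≤ liminf (fun m => ∫⁻ t, ‖suppFn (⇑x') (Γₙ n t) - suppFn (⇑x') (Γₙ m t)‖₊ ∂μ01)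
            atTop := by
        have haeq : ∀ᵐ t ∂μ01,
            (‖suppFn (⇑x') (Γₙ n t) - suppFn (⇑x') (Γ t)‖₊ : ℝ≥0∞)
            = liminf (fun m =>
                (‖suppFn (⇑x') (Γₙ n t) - suppFn (⇑x') (Γₙ m t)‖₊ : ℝ≥0∞)) atTop := by
          filter_upwards [hae] with t ht
          symm
          refine Filter.Tendsto.liminf_eq ?_
          have h1 : Tendsto (fun m => suppFn (⇑x') (Γₙ n t) - suppFn (⇑x') (Γₙ m t)) atTop
              (𝓝 (suppFn (⇑x') (Γₙ n t) - suppFn (⇑x') (Γ t))) := tendsto_const_nhds.sub ht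
          have h2 : Tendsto (fun y : ℝ => (‖y‖₊ : ℝ≥0∞))
              (𝓝 (suppFn (⇑x') (Γₙ n t) - suppFn (⇑x') (Γ t)))
              (𝓝 (‖suppFn (⇑x') (Γₙ n t) - suppFn (⇑x') (Γ t)‖₊ : ℝ≥0∞)) := by
            simp_rw [← enorm_eq_nnnorm, ← ofReal_norm]
            exact (ENNReal.continuous_ofReal.tendsto _).comp (continuous_norm.tendsto _)
          exact h2.comp h1
        rw [lintegral_congr_ae haeq]
        exact lintegral_liminf_le hmeasnm
      refine step1.trans (Filter.liminf_le_of_frequently_le' ?_)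
      refine ((eventually_ge_atTop N).mono fun m hm => ?_).frequently
      have hptw : ∀ t, (‖suppFn (⇑x') (Γₙ n t) - suppFn (⇑x') (Γₙ m t)‖₊ : ℝ≥0∞)
          ≤ ENNReal.ofReal (c * hDist (semiDist (p i₀)) (Γₙ n t) (Γₙ m t)) := fun t => by
        rw [← enorm_eq_nnnorm, ← ofReal_norm, Real.norm_eq_abs]
        exact ENNReal.ofReal_le_ofReal (key ((hsimple n).2 t).2.1 ((hsimple n).2 t).1
          ((hsimple m).2 t).2.1 ((hsimple m).2 t).1)
      have hint : Integrable (fun t => c * hDist (semiDist (p i₀)) (Γₙ n t) (Γₙ m t)) μ01 :=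
        (simpleMF_pair_integrable (Γₙ n) (Γₙ m) (hsimple n).1 (hsimple m).1
          (fun A B => hDist (semiDist (p i₀)) A B) μ01).const_mul c
      calc ∫⁻ t, ‖suppFn (⇑x') (Γₙ n t) - suppFn (⇑x') (Γₙ m t)‖₊ ∂μ01
          ≤ ∫⁻ t, ENNReal.ofReal (c * hDist (semiDist (p i₀)) (Γₙ n t) (Γₙ m t)) ∂μ01 :=
            lintegral_mono hptw
        _ = ENNReal.ofReal (∫ t, c * hDist (semiDist (p i₀)) (Γₙ n t) (Γₙ m t) ∂μ01) :=
            (MeasureTheory.ofReal_integral_eq_lintegral_ofReal hint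
              (Eventually.of_forall fun t => mul_nonneg hc (hHnn _ _))).symm
        _ ≤ ENNReal.ofReal (c * ε) := by
            refine ENNReal.ofReal_le_ofReal ?_
            rw [MeasureTheory.integral_const_mul]
            exact mul_le_mul_of_nonneg_left (le_of_lt (hN n hn m hm)) hc
    have hgmeas : AEStronglyMeasurable (fun t => suppFn (⇑x') (Γ t)) μ01 :=
      aestronglyMeasurable_of_tendsto_ae atTop (fun n => (hGmeas n).aestronglyMeasurable) hae
    have hgint : Integrable (fun t => suppFn (⇑x') (Γ t)) μ01 := by
      obtain ⟨N, hN⟩ := hkeyCauchy 1 one_pos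
      refine ⟨hgmeas, ?_⟩
      have hptw : ∀ t, (‖suppFn (⇑x') (Γ t)‖₊ : ℝ≥0∞)
          ≤ (‖suppFn (⇑x') (Γₙ N t)‖₊ : ℝ≥0∞)
            + (‖suppFn (⇑x') (Γ t) - suppFn (⇑x') (Γₙ N t)‖₊ : ℝ≥0∞) := fun t => by
        rw [← ENNReal.coe_add]
        exact ENNReal.coe_le_coe.2 (nnnorm_le_insert' _ _)
      show (∫⁻ t, (‖suppFn (⇑x') (Γ t)‖₊ : ℝ≥0∞) ∂μ01) < ⊤
      refine lt_of_le_of_lt (lintegral_mono hptw) ?_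
      rw [lintegral_add_left (f := fun t => (‖suppFn (⇑x') (Γₙ N t)‖₊ : ℝ≥0∞)) (hGmeas N).enorm]
      refine ENNReal.add_lt_top.2 ⟨(hGint N).2, ?_⟩
      refine lt_of_le_of_lt ?_ (lt_of_le_of_lt (hN N le_rfl) ENNReal.ofReal_lt_top)
      refine le_of_eq (lintegral_congr fun t => ?_)
      rw [← enorm_eq_nnnorm, ← enorm_eq_nnnorm, ← ofReal_norm, ← ofReal_norm, norm_sub_rev]
    have hL1 : Tendsto (fun n => ∫⁻ t, ‖suppFn (⇑x') (Γₙ n t) - suppFn (⇑x') (Γ t)‖₊ ∂μ01)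
        atTop (𝓝 0) := by
      rw [ENNReal.tendsto_nhds_zero]
      intro ε hε
      have hr0 : (0:ℝ≥0∞) < min 1 ε := lt_min zero_lt_one hε
      have hrtop : min 1 ε ≠ ⊤ := ((min_le_left _ _).trans_lt ENNReal.one_lt_top).ne
      have hrt : 0 < (min 1 ε).toReal := ENNReal.toReal_pos hr0.ne' hrtop
      have hδ : 0 < (min 1 ε).toReal / (c + 1) := by positivity
      obtain ⟨N, hN⟩ := hkeyCauchy _ hδ
      filter_upwards [eventually_ge_atTop N] with n hn
      refine (hN n hn).trans ?_
      have hle1 : c * ((min 1 ε).toReal / (c + 1)) ≤ (min 1 ε).toReal := by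
        rw [show c * ((min 1 ε).toReal / (c + 1)) = (min 1 ε).toReal * (c / (c + 1)) by ring]
        calc (min 1 ε).toReal * (c / (c + 1)) ≤ (min 1 ε).toReal * 1 :=
              mul_le_mul_of_nonneg_left (div_le_one_of_le₀ (by linarith) (by linarith)) hrt.le
          _ = _ := mul_one _
      exact (ENNReal.ofReal_le_ofReal hle1).trans
        (by rw [ENNReal.ofReal_toReal hrtop]; exact min_le_right _ _)
    refine ⟨hgint, fun E hE hEm => ?_⟩
    haveI hfinE : IsFiniteMeasure (volume.restrict E) := isFiniteMeasure_restrict_of_subset hE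
    have hrestr : volume.restrict E = μ01.restrict E := by
      unfold μ01
      rw [Measure.restrict_restrict hEm, Set.inter_eq_self_of_subset_left hE]
    have hGintE : ∀ n, Integrable (fun t => suppFn (⇑x') (Γₙ n t)) (volume.restrict E) :=
      fun n => simpleMF_integrable (Γₙ n) (hsimple n).1 (suppFn (⇑x')) _
    have hgintE : Integrable (fun t => suppFn (⇑x') (Γ t)) (volume.restrict E) :=
      hgint.mono_measure (by rw [hrestr]; exact Measure.restrict_le_self)
    have hL1E : Tendsto (fun n => ∫⁻ t, ‖suppFn (⇑x') (Γₙ n t) - suppFn (⇑x') (Γ t)‖₊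
        ∂(volume.restrict E)) atTop (𝓝 0) := by
      refine tendsto_of_tendsto_of_tendsto_of_le_of_le tendsto_const_nhds hL1
        (fun n => bot_le) (fun n => ?_)
      rw [hrestr]
      exact lintegral_mono' Measure.restrict_le_self le_rfl
    have hint1 : Tendsto (fun n => ∫ t in E, suppFn (⇑x') (Γₙ n t)) atTop
        (𝓝 (∫ t in E, suppFn (⇑x') (Γ t))) :=
      tendsto_integral_of_L1 _ hgintE.aestronglyMeasurable (Eventually.of_forall hGintE) hL1E
    have hsimpleeq : ∀ n, ∫ t in E, suppFn (⇑x') (Γₙ n t)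
        = suppFn (⇑x') (simpleIntegral (Γₙ n) E) := fun n => by
      rw [setIntegral_suppFn_simple (Γₙ n) (hsimple n).1 hEm hE x',
        ((simpleIntegral_spec (Γₙ n) (hsimple n).1 (hsimple n).2 E).2 x')]
    obtain ⟨hIE, hIconv⟩ := hI E hE hEm
    have hint2 : Tendsto (fun n => suppFn (⇑x') (simpleIntegral (Γₙ n) E)) atTop
        (𝓝 (suppFn (⇑x') (I E))) := by
      rw [← tendsto_sub_nhds_zero_iff]
      refine squeeze_zero_norm (fun n => ?_) (by simpa using (hIconv i₀).const_mul c)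
      rw [Real.norm_eq_abs]
      have hsi := (simpleIntegral_spec (Γₙ n) (hsimple n).1 (hsimple n).2 E).1
      exact key hsi.1 hsi.2 hIE.2.1 hIE.1
    have hint1' : Tendsto (fun n => suppFn (⇑x') (simpleIntegral (Γₙ n) E)) atTop
        (𝓝 (∫ t in E, suppFn (⇑x') (Γ t))) := by
      simpa only [hsimpleeq] using hint1
    exact tendsto_nhds_unique hint2 hint1'
  exact ⟨fun x' => (main x').1, fun E hE hEm x' => (main x').2 E hE hEm⟩
end
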